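/- Consider the six routes p₁ = [0,4,5], p₂ = [0,1,4,2,5], p₃ = [0,1,4,5], p₄ = [0,4,2,5], p₅ = [0,1,3,5], p₆ = [0,2,3,5], and the two vectors x¹ = (1/2, 1/2, 0, 0, 1/2, 1/2) and x² = (0, 0, 1/2, 1/2, 1/2, 1/2) in ℝ⁶. Then: (i) for every customer i ∈ {1,2,3,4}, ∑_{r=1}^{6} (number of occurrences of i in p_r)·x¹_r = 1 and ∑_{r=1}^{6} (number of occurrences of i in p_r)·x²_r = 1; (ii) for every pair (i,j) ∈ ℕ × ℕ, ∑_{r=1}^{6} (number of occurrences of (i,j) among consecutive pairs of p_r)·x¹_r = ∑_{r=1}^{6} (number of occurrences of (i,j) among consecutive pairs of p_r)·x²_r; and (iii) with c_r = 1 if p_r contains an element of {1,2,3} and c_r = 0 otherwise, ∑_{r=1}^{6} c_r·x¹_r = 3/2 < 2 while ∑_{r=1}^{6} c_r·x²_r = 2. -/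

import Mathlib

/-- The six routes of the SCC counterexample. -/
def sccRoutes : Fin 6 → List ℕ
  | 0 => [0, 4, 5]
  | 1 => [0, 1, 4, 2, 5]
  | 2 => [0, 1, 4, 5]
  | 3 => [0, 4, 2, 5]
  | 4 => [0, 1, 3, 5]
  | 5 => [0, 2, 3, 5]

/-- The first fractional solution. -/
noncomputable def sccX1 : Fin 6 → ℝ
  | 0 => 1/2
  | 1 => 1/2
  | 2 => 0
  | 3 => 0
  | 4 => 1/2
  | 5 => 1/2

/-- The second fractional solution. -/
noncomputable def sccX2 : Fin 6 → ℝ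
  | 0 => 0
  | 1 => 0
  | 2 => 1/2
  | 3 => 1/2
  | 4 => 1/2
  | 5 => 1/2

/-- The arcs of a route: its consecutive pairs. -/
def routeArcs (p : List ℕ) : List (ℕ × ℕ) := p.zip p.tail

/-- The SCC coefficient of a route for the subset `{1,2,3}`. -/
noncomputable def sccCoeff (p : List ℕ) : ℝ :=
  if ∃ a ∈ p, a ∈ ({1, 2, 3} : Finset ℕ) then 1 else 0

/-- The SCC counterexample: `x¹` and `x²` have the same visit counts and the
same arc flows, yet `x¹` violates the SCC for `S = {1,2,3}` while `x²`
satisfies it. -/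
theorem scc_not_robust_counterexample :
    (∀ i ∈ ({1, 2, 3, 4} : Finset ℕ),
        (∑ r : Fin 6, ((sccRoutes r).count i : ℝ) * sccX1 r) = 1 ∧
        (∑ r : Fin 6, ((sccRoutes r).count i : ℝ) * sccX2 r) = 1) ∧
    (∀ i j : ℕ,
        (∑ r : Fin 6, ((routeArcs (sccRoutes r)).count (i, j) : ℝ) * sccX1 r) =
        (∑ r : Fin 6, ((routeArcs (sccRoutes r)).count (i, j) : ℝ) * sccX2 r)) ∧
    ((∑ r : Fin 6, sccCoeff (sccRoutes r) * sccX1 r) = 3/2 ∧ (3:ℝ)/2 < 2 ∧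
     (∑ r : Fin 6, sccCoeff (sccRoutes r) * sccX2 r) = 2) := by
  refine ⟨?_, ?_, ?_, by norm_num, ?_⟩
  · intro i hi
    fin_cases hi <;>
      constructor <;>
      · simp [Fin.sum_univ_six, sccRoutes, sccX1, sccX2]
        norm_num
  · intro i j
    simp only [Fin.sum_univ_six, sccRoutes, routeArcs, sccX1, sccX2,
      List.zip, List.zipWith, List.tail_cons, List.count_cons, List.count_nil]
    push_cast
    ring_nf
  · simp [Fin.sum_univ_six, sccRoutes, sccCoeff, sccX1]
    norm_num
  · simp [Fin.sum_univ_six, sccRoutes, sccCoeff, sccX2]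
    norm_num
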